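/- Assume Σ_ℓ(0) is integral and let α ∈ Σ_ℓ. Then the submonoid of ℤ × X generated by (1, 0) together with the set {(D_ℓ(x), x − α) : x ∈ X} is a finitely generated additive monoid. (This monoid is the weight monoid of the R-algebra A_{ℓ,α,0} = R[s^{D_ℓ(x)}·w^{x−α} : x ∈ X] over a discrete valuation ring R with uniformizer s, so A_{ℓ,α,0} is finitely generated over R.) -/

import Mathlib

open scoped BigOperators Pointwise

namespace NFC

/-- The coordinatewise embedding of the lattice `X = ℤ^g` into `X_ℝ = ℝ^g`. -/
def iota {g : ℕ} (x : Fin g → ℤ) : Fin g → ℝ := fun i => (x i : ℝ)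

/-- The ℝ-linear extension of an integral linear functional `u ∈ X^∨` to `X_ℝ`. -/
noncomputable def extd {g : ℕ} (u : (Fin g → ℤ) →ₗ[ℤ] ℤ) (x : Fin g → ℝ) : ℝ :=
  ∑ i, (u (Pi.single i 1) : ℝ) * x i

/-- `E_ℓ(u) = ℓ · u(φ(u))`. -/
def El {g : ℕ} {Y : Submodule ℤ (Fin g → ℤ)}
    (φ : ((Fin g → ℤ) →ₗ[ℤ] ℤ) → Y) (ℓ : ℕ) (u : (Fin g → ℤ) →ₗ[ℤ] ℤ) : ℤ :=
  (ℓ : ℤ) * u (φ u : Fin g → ℤ)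

/-- `Σ_ℓ = {α ∈ X : E_ℓ(u) + u(α) ≥ 0 for all u ∈ X^∨}`. -/
def SigmaL {g : ℕ} {Y : Submodule ℤ (Fin g → ℤ)}
    (φ : ((Fin g → ℤ) →ₗ[ℤ] ℤ) → Y) (ℓ : ℕ) : Set (Fin g → ℤ) :=
  {α | ∀ u : (Fin g → ℤ) →ₗ[ℤ] ℤ, 0 ≤ El φ ℓ u + u α}

/-- The Voronoi polytope `Σ_ℓ(c)`, defined w.r.t. the norm `‖z‖ = √(B̄(z,z))`. -/
noncomputable def VorP {g : ℕ} {Y : Submodule ℤ (Fin g → ℤ)}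
    (Bb : (Fin g → ℝ) →ₗ[ℝ] (Fin g → ℝ) →ₗ[ℝ] ℝ)
    (φ : ((Fin g → ℤ) →ₗ[ℤ] ℤ) → Y) (ℓ : ℕ)
    (c : (Fin g → ℤ) →ₗ[ℤ] ℤ) : Set (Fin g → ℝ) :=
  {x | ∀ u : (Fin g → ℤ) →ₗ[ℤ] ℤ,
    Real.sqrt (Bb (x - iota ((2 * (ℓ : ℤ)) • ((φ c : Fin g → ℤ))))
               (x - iota ((2 * (ℓ : ℤ)) • ((φ c : Fin g → ℤ))))) ≤
    Real.sqrt (Bb (x - iota ((2 * (ℓ : ℤ)) • ((φ u : Fin g → ℤ))))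
               (x - iota ((2 * (ℓ : ℤ)) • ((φ u : Fin g → ℤ)))))}

/-- A subset `Δ ⊆ X_ℝ` is integral: a bounded convex polytope equal to the convex hull
of `Δ ∩ X`, symmetric about `0`, containing `0`, with `Δ ∩ X` containing a ℤ-basis. -/
def IsIntegral {g : ℕ} (Δ : Set (Fin g → ℝ)) : Prop :=
  Bornology.IsBounded Δ ∧
  Δ = convexHull ℝ (Δ ∩ Set.range (iota (g := g))) ∧
  Δ = -Δ ∧ (0 : Fin g → ℝ) ∈ Δ ∧
  ∃ b : Module.Basis (Fin g) ℤ (Fin g → ℤ), ∀ i, iota (b i) ∈ Δ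

/-- `Σ_ℓ^α = (α + 2ℓφ(X^∨)) ∩ Σ_ℓ`. -/
def SigmaAlpha {g : ℕ} {Y : Submodule ℤ (Fin g → ℤ)}
    (φ : ((Fin g → ℤ) →ₗ[ℤ] ℤ) → Y) (ℓ : ℕ) (α : Fin g → ℤ) : Set (Fin g → ℤ) :=
  {β | β ∈ SigmaL φ ℓ ∧ ∃ u : (Fin g → ℤ) →ₗ[ℤ] ℤ, β = α + (2 * (ℓ : ℤ)) • ((φ u : Fin g → ℤ))}

/-- The convex cone generated by a set `S` (the set of all nonnegative combinations). -/
def conicHull {M : Type*} [AddCommMonoid M] [Module ℝ M] (S : Set M) : Set M :=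
  {y | ∃ (n : ℕ) (c : Fin n → ℝ) (v : Fin n → M),
    (∀ i, 0 ≤ c i) ∧ (∀ i, v i ∈ S) ∧ y = ∑ i, c i • v i}

/-- `Cone(C_ℓ^β)`: the convex cone in `X_ℝ` generated by `{γ − β : γ ∈ Σ_ℓ}`. -/
def coneC {g : ℕ} {Y : Submodule ℤ (Fin g → ℤ)}
    (φ : ((Fin g → ℤ) →ₗ[ℤ] ℤ) → Y) (ℓ : ℕ) (β : Fin g → ℤ) : Set (Fin g → ℝ) :=
  conicHull {w | ∃ γ ∈ SigmaL φ ℓ, w = iota (γ - β)}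


lemma iota_sub {g : ℕ} (x y : Fin g → ℤ) : iota (x - y) = iota x - iota y := by
  funext i; simp [iota]

lemma iota_add {g : ℕ} (x y : Fin g → ℤ) : iota (x + y) = iota x + iota y := by
  funext i; simp [iota]

lemma iota_zsmul {g : ℕ} (n : ℤ) (x : Fin g → ℤ) : iota (n • x) = (n : ℝ) • iota x := by
  funext i; simp [iota]

lemma iota_neg {g : ℕ} (x : Fin g → ℤ) : iota (-x) = -iota x := by
  funext i; simp [iota]

lemma iota_single {g : ℕ} (i : Fin g) : iota (Pi.single i 1) = Pi.single i (1:ℝ) := by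
  funext j
  by_cases h : j = i
  · subst h; simp [iota]
  · simp [iota, Pi.single_apply, h]

lemma expand {g : ℕ} (Bb : (Fin g → ℝ) →ₗ[ℝ] (Fin g → ℝ) →ₗ[ℝ] ℝ) (v w : Fin g → ℝ) :
    Bb v w = ∑ i, Bb v (Pi.single i 1) * w i := by
  conv_lhs => rw [← Finset.univ_sum_single w]
  rw [map_sum]
  refine Finset.sum_congr rfl fun i _ => ?_
  have h : Pi.single i (w i) = w i • (Pi.single i (1:ℝ) : Fin g → ℝ) := by
    funext j
    by_cases h : j = i
    · subst h; simp
    · simp [Pi.single_apply, h]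
  rw [h, map_smul, smul_eq_mul, mul_comm]

lemma sphere_min {g : ℕ} (hg : 1 ≤ g) {f : (Fin g → ℝ) → ℝ} (hf : Continuous f)
    (hpos : ∀ v : Fin g → ℝ, ‖v‖ = 1 → 0 < f v) :
    ∃ c : ℝ, 0 < c ∧ ∀ v : Fin g → ℝ, ‖v‖ = 1 → c ≤ f v := by
  have hne : (Metric.sphere (0 : Fin g → ℝ) 1).Nonempty := by
    refine ⟨(Pi.single (⟨0, hg⟩ : Fin g) (1:ℝ) : Fin g → ℝ), ?_⟩
    rw [mem_sphere_zero_iff_norm, Pi.norm_single]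
    simp
  obtain ⟨z, hz, hzmin⟩ :=
    (isCompact_sphere (0 : Fin g → ℝ) 1).exists_isMinOn hne hf.continuousOn
  rw [mem_sphere_zero_iff_norm] at hz
  exact ⟨f z, hpos z hz, fun v hv =>
    hzmin (by rwa [mem_sphere_zero_iff_norm])⟩



set_option maxHeartbeats 1000000
lemma bilin_add {g : ℕ} (Bb : (Fin g → ℝ) →ₗ[ℝ] (Fin g → ℝ) →ₗ[ℝ] ℝ)
    (hs : ∀ x y : Fin g → ℝ, Bb x y = Bb y x) (p q : Fin g → ℝ) :
    Bb (p + q) (p + q) = Bb p p + 2 * Bb p q + Bb q q := by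
  simp only [map_add, LinearMap.add_apply]; rw [hs q p]; ring

lemma bilin_sub {g : ℕ} (Bb : (Fin g → ℝ) →ₗ[ℝ] (Fin g → ℝ) →ₗ[ℝ] ℝ)
    (hs : ∀ x y : Fin g → ℝ, Bb x y = Bb y x) (p q : Fin g → ℝ) :
    Bb (p - q) (p - q) = Bb p p - 2 * Bb p q + Bb q q := by
  simp only [map_sub, LinearMap.sub_apply]; rw [hs q p]; ring

/-- if `Σ_ℓ(0)` is integral and `α ∈ Σ_ℓ`, the submonoid of `ℤ × X`
generated by `(1,0)` and `{(D_ℓ(x), x − α) : x ∈ X}` (the weight monoid of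
`A_{ℓ,α,0}`) is finitely generated. -/
theorem statement9
    (g : ℕ) (hg : 1 ≤ g)
    (Y : Submodule ℤ (Fin g → ℤ))
    (hYfin : Y.toAddSubgroup.index ≠ 0)
    (B : Y →ₗ[ℤ] (Fin g → ℤ) →ₗ[ℤ] ℤ)
    (hBsymm : ∀ y z : Y, B y (z : Fin g → ℤ) = B z (y : Fin g → ℤ))
    (hBpos : ∀ y : Y, y ≠ 0 → 0 < B y (y : Fin g → ℤ))
    (N : ℕ) (hN : N = (LinearMap.range B).toAddSubgroup.index) (hNpos : 0 < N)
    (φ : ((Fin g → ℤ) →ₗ[ℤ] ℤ) → Y)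
    (hφ : ∀ u : (Fin g → ℤ) →ₗ[ℤ] ℤ, B (φ u) = (N : ℤ) • u)
    (Bb : (Fin g → ℝ) →ₗ[ℝ] (Fin g → ℝ) →ₗ[ℝ] ℝ)
    (hBbsymm : ∀ x y : Fin g → ℝ, Bb x y = Bb y x)
    (hBbpos : ∀ x : Fin g → ℝ, x ≠ 0 → 0 < Bb x x)
    (hBbcompat : ∀ (y : Y) (x : Fin g → ℤ), Bb (iota (y : Fin g → ℤ)) (iota x) = (B y x : ℝ))
    (ℓ : ℕ) (hℓ : 0 < ℓ)
    (D : (Fin g → ℤ) → ℤ)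
    (hD : ∀ γ ∈ SigmaL φ ℓ, ∀ z : (Fin g → ℤ) →ₗ[ℤ] ℤ,
      D (γ + (2 * (ℓ : ℤ)) • ((φ z : Fin g → ℤ))) = El φ ℓ z + z γ)
    (hint : IsIntegral (VorP Bb φ ℓ 0))
    (α : Fin g → ℤ) (hα : α ∈ SigmaL φ ℓ) :
    (AddSubmonoid.closure
      (insert ((1 : ℤ), (0 : Fin g → ℤ))
        {p : ℤ × (Fin g → ℤ) | ∃ x : Fin g → ℤ, p = (D x, x - α)})).FG := by
  classical
  have hlR : (0:ℝ) < (ℓ:ℝ) := by exact_mod_cast hℓ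
  have hNR : (0:ℝ) < (N:ℝ) := by exact_mod_cast hNpos
  -- injectivity of B and properties of φ
  have hBinj : Function.Injective B := by
    intro a b hab
    by_contra hne
    have h1 : B (a - b) = 0 := by rw [map_sub, hab, sub_self]
    have h2 := hBpos (a - b) (sub_ne_zero_of_ne hne)
    rw [h1] at h2
    simp at h2
  have hφzero : φ 0 = 0 := hBinj (by rw [hφ, map_zero, smul_zero])
  have hφsub : ∀ u v, φ (u - v) = φ u - φ v := fun u v => hBinj (by
    rw [map_sub, hφ, hφ, hφ, smul_sub])
  have hφβ : ∀ y : Y, φ (B y) = (N:ℤ) • y := fun y => hBinj (by rw [hφ, map_smul])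
  -- compatibility, flipped
  have hBb' : ∀ (y : Y) (x : Fin g → ℤ), Bb (iota x) (iota (y : Fin g → ℤ)) = (B y x : ℝ) :=
    fun y x => by rw [hBbsymm, hBbcompat]
  have hcross : ∀ (x : Fin g → ℤ) (z : (Fin g → ℤ) →ₗ[ℤ] ℤ),
      Bb (iota x) (iota ((2*(ℓ:ℤ)) • ((φ z : Fin g → ℤ))))
        = 2*(ℓ:ℝ)*(N:ℝ)*((z x : ℤ):ℝ) := by
    intro x z
    rw [iota_zsmul, map_smul, smul_eq_mul, hBb', hφ]
    simp only [LinearMap.smul_apply, smul_eq_mul]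
    push_cast
    ring
  have hquad : ∀ (a : Fin g → ℤ) (z : (Fin g → ℤ) →ₗ[ℤ] ℤ),
      Bb (iota (a + (2*(ℓ:ℤ)) • ((φ z : Fin g → ℤ))))
         (iota (a + (2*(ℓ:ℤ)) • ((φ z : Fin g → ℤ))))
      = Bb (iota a) (iota a) + 4*(ℓ:ℝ)*(N:ℝ)*((z a : ℤ):ℝ)
        + 4*(ℓ:ℝ)^2*(N:ℝ)*((z ((φ z : Fin g → ℤ)) : ℤ):ℝ) := by
    intro a z
    have h1 := hcross a z
    have h2 := hcross ((2*(ℓ:ℤ)) • ((φ z : Fin g → ℤ))) z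
    have h3 : ((z ((2*(ℓ:ℤ)) • ((φ z : Fin g → ℤ))) : ℤ) : ℝ)
        = 2*(ℓ:ℝ)*((z ((φ z : Fin g → ℤ)) : ℤ):ℝ) := by
      rw [map_smul, smul_eq_mul]
      push_cast
      ring
    rw [iota_add, bilin_add Bb hBbsymm, h1, h2, h3]
    ring
  -- nonnegativity of the quadratic form
  have hQ0 : ∀ v : Fin g → ℝ, 0 ≤ Bb v v := by
    intro v
    by_cases h : v = 0
    · subst h; simp
    · exact le_of_lt (hBbpos v h)
  -- coercivity constant
  obtain ⟨c, hc, hcmin⟩ : ∃ c : ℝ, 0 < c ∧ ∀ v : Fin g → ℝ, c * ‖v‖^2 ≤ Bb v v := by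
    have hcont : Continuous fun v : Fin g → ℝ => Bb v v := by
      have heq : (fun v : Fin g → ℝ => Bb v v)
          = fun v => ∑ i, (Bb.flip (Pi.single i 1)) v * v i := by
        funext v; rw [expand Bb v v]; rfl
      rw [heq]
      exact continuous_finset_sum _ fun i _ =>
        ((Bb.flip (Pi.single i 1)).continuous_of_finiteDimensional).mul (continuous_apply i)
    obtain ⟨c, hc, hmin⟩ := sphere_min hg hcont (fun v hv =>
      hBbpos v (fun h => by rw [h] at hv; simp at hv))
    refine ⟨c, hc, fun v => ?_⟩
    by_cases h : v = 0
    · subst h; simp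
    · have hn0 : 0 < ‖v‖ := norm_pos_iff.mpr h
      have hu : ‖(‖v‖⁻¹ • v)‖ = 1 := by
        rw [norm_smul, norm_inv, norm_norm]; field_simp
      have hle := hmin _ hu
      have hveq : Bb (‖v‖⁻¹ • v) (‖v‖⁻¹ • v) = ‖v‖⁻¹ * (‖v‖⁻¹ * Bb v v) := by
        simp only [map_smul, LinearMap.smul_apply, smul_eq_mul]
      rw [hveq] at hle
      have hle2 : c * (‖v‖ * ‖v‖) ≤ ‖v‖⁻¹ * (‖v‖⁻¹ * Bb v v) * (‖v‖ * ‖v‖) :=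
        mul_le_mul_of_nonneg_right hle (by positivity)
      have hinv : ‖v‖⁻¹ * ‖v‖ = 1 := inv_mul_cancel₀ (ne_of_gt hn0)
      have hle3 : ‖v‖⁻¹ * (‖v‖⁻¹ * Bb v v) * (‖v‖ * ‖v‖)
          = (‖v‖⁻¹ * ‖v‖) * ((‖v‖⁻¹ * ‖v‖) * Bb v v) := by ring
      rw [hle3, hinv, one_mul, one_mul] at hle2
      rw [pow_two]
      linarith
  -- lower bound for the "gradient" along coordinate directions
  obtain ⟨μ, hμ, hμle⟩ : ∃ μ : ℝ, 0 < μ ∧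
      ∀ v : Fin g → ℝ, μ * ‖v‖ ≤ ∑ i, |Bb v (Pi.single i 1)| := by
    have hcont : Continuous fun v : Fin g → ℝ => ∑ i, |Bb v (Pi.single i 1)| :=
      continuous_finset_sum _ fun i _ =>
        ((Bb.flip (Pi.single i 1)).continuous_of_finiteDimensional).abs
    have hpos : ∀ v : Fin g → ℝ, ‖v‖ = 1 → 0 < ∑ i, |Bb v (Pi.single i 1)| := by
      intro v hv
      have hge : 0 ≤ ∑ i, |Bb v (Pi.single i 1)| :=
        Finset.sum_nonneg fun i _ => abs_nonneg _
      rcases eq_or_lt_of_le hge with h0 | h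
      · exfalso
        have hall := (Finset.sum_eq_zero_iff_of_nonneg
          (fun i (_ : i ∈ Finset.univ) => abs_nonneg (Bb v (Pi.single i 1)))).mp h0.symm
        have hvv : Bb v v = 0 := by
          rw [expand Bb v v]
          exact Finset.sum_eq_zero fun i hi => by
            rw [abs_eq_zero.mp (hall i hi), zero_mul]
        have hvne : v ≠ 0 := fun h => by rw [h] at hv; simp at hv
        exact absurd hvv (ne_of_gt (hBbpos v hvne))
      · exact h
    obtain ⟨μ, hμ, hmin⟩ := sphere_min hg hcont hpos
    refine ⟨μ, hμ, fun v => ?_⟩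
    by_cases h : v = 0
    · subst h; simp
    · have hn0 : 0 < ‖v‖ := norm_pos_iff.mpr h
      have hu : ‖(‖v‖⁻¹ • v)‖ = 1 := by
        rw [norm_smul, norm_inv, norm_norm]; field_simp
      have hle := hmin _ hu
      have heq : ∀ i : Fin g, |Bb (‖v‖⁻¹ • v) (Pi.single i 1)|
          = ‖v‖⁻¹ * |Bb v (Pi.single i 1)| := by
        intro i
        rw [map_smul, LinearMap.smul_apply, smul_eq_mul, abs_mul, abs_inv, abs_norm]
      rw [Finset.sum_congr rfl (fun i _ => heq i), ← Finset.mul_sum] at hle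
      have hinv : ‖v‖⁻¹ * ‖v‖ = 1 := inv_mul_cancel₀ (ne_of_gt hn0)
      calc μ * ‖v‖ ≤ (‖v‖⁻¹ * ∑ i, |Bb v (Pi.single i 1)|) * ‖v‖ :=
            mul_le_mul_of_nonneg_right hle (norm_nonneg v)
        _ = (‖v‖⁻¹ * ‖v‖) * ∑ i, |Bb v (Pi.single i 1)| := by ring
        _ = ∑ i, |Bb v (Pi.single i 1)| := by rw [hinv, one_mul]
  -- the upper bound constant U
  obtain ⟨U, hUdef⟩ : ∃ U : ℝ, U = ∑ i, ∑ j, |Bb (Pi.single i 1) (Pi.single j 1)| := ⟨_, rfl⟩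
  have hU0 : 0 ≤ U := hUdef ▸ Finset.sum_nonneg fun i _ =>
    Finset.sum_nonneg fun j _ => abs_nonneg _
  have hrow : ∀ w v : Fin g → ℝ, |Bb w v| ≤ (∑ j, |Bb w (Pi.single j 1)|) * ‖v‖ := by
    intro w v
    rw [expand Bb w v]
    calc |∑ j, Bb w (Pi.single j 1) * v j| ≤ ∑ j, |Bb w (Pi.single j 1) * v j| :=
          Finset.abs_sum_le_sum_abs _ _
      _ ≤ ∑ j, |Bb w (Pi.single j 1)| * ‖v‖ := Finset.sum_le_sum fun j _ => by
          rw [abs_mul]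
          exact mul_le_mul_of_nonneg_left
            (by simpa [iota, Real.norm_eq_abs] using norm_le_pi_norm v j) (abs_nonneg _)
      _ = _ := by rw [Finset.sum_mul]
  have hupper : ∀ v : Fin g → ℝ, Bb v v ≤ U * ‖v‖^2 := by
    intro v
    have h1 : |Bb v v| ≤ ∑ i, (∑ j, |Bb (Pi.single i 1) (Pi.single j 1)|) * ‖v‖ * ‖v‖ := by
      rw [expand Bb v v]
      calc |∑ i, Bb v (Pi.single i 1) * v i| ≤ ∑ i, |Bb v (Pi.single i 1) * v i| :=
            Finset.abs_sum_le_sum_abs _ _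
        _ ≤ ∑ i, (∑ j, |Bb (Pi.single i 1) (Pi.single j 1)|) * ‖v‖ * ‖v‖ :=
            Finset.sum_le_sum fun i _ => by
              rw [abs_mul]
              have hb : |Bb v (Pi.single i 1)|
                  ≤ (∑ j, |Bb (Pi.single i 1) (Pi.single j 1)|) * ‖v‖ := by
                rw [hBbsymm]; exact hrow _ v
              have hvi : |v i| ≤ ‖v‖ := by
                simpa [Real.norm_eq_abs] using norm_le_pi_norm v i
              have hs0 : 0 ≤ (∑ j, |Bb (Pi.single i 1) (Pi.single j 1)|) * ‖v‖ :=
                le_trans (abs_nonneg _) hb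
              exact mul_le_mul hb hvi (abs_nonneg _) hs0
    calc Bb v v ≤ |Bb v v| := le_abs_self _
      _ ≤ ∑ i, (∑ j, |Bb (Pi.single i 1) (Pi.single j 1)|) * ‖v‖ * ‖v‖ := h1
      _ = U * ‖v‖^2 := by
          rw [hUdef, ← Finset.sum_mul, ← Finset.sum_mul]; ring
  have hUpos : 0 < U := by
    have he0 : (Pi.single (⟨0, hg⟩ : Fin g) (1:ℝ) : Fin g → ℝ) ≠ 0 := by
      intro h
      have h2 := congrFun h ⟨0, hg⟩
      simp at h2
    have h3 := hBbpos _ he0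
    have h4 := hupper (Pi.single (⟨0, hg⟩ : Fin g) (1:ℝ))
    have h5 : ‖(Pi.single (⟨0, hg⟩ : Fin g) (1:ℝ) : Fin g → ℝ)‖ = 1 := by
      rw [Pi.norm_single]; simp
    rw [h5] at h4
    nlinarith
  -- boundedness implies finiteness in the lattice
  have hfin : ∀ r : ℝ, {y : Fin g → ℤ | Bb (iota y) (iota y) ≤ r}.Finite := by
    intro r
    set sR : ℝ := Real.sqrt (max r 0 / c) with hsR
    refine Set.Finite.subset (Set.finite_Icc
      (fun _ : Fin g => -(⌈sR⌉ : ℤ)) (fun _ : Fin g => (⌈sR⌉ : ℤ))) ?_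
    intro y hy
    have h1 : c * ‖iota y‖^2 ≤ r := le_trans (hcmin _) hy
    have h2 : ‖iota y‖^2 ≤ max r 0 / c := by
      rw [le_div_iff₀ hc]
      nlinarith [le_max_left r 0]
    have h3 : ‖iota y‖ ≤ sR := by
      have hs2 : sR^2 = max r 0 / c := Real.sq_sqrt (by positivity)
      nlinarith [norm_nonneg (iota y), Real.sqrt_nonneg (max r 0 / c)]
    have h4 : ∀ i, |(y i : ℝ)| ≤ sR := fun i =>
      le_trans (by simpa [iota, Real.norm_eq_abs] using norm_le_pi_norm (iota y) i) h3
    constructor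
    · intro i
      have h5 : -sR ≤ (y i : ℝ) := by have := h4 i; rw [abs_le] at this; exact this.1
      have h6 : (-(⌈sR⌉:ℤ) : ℝ) ≤ (y i : ℝ) := le_trans (by push_cast; linarith [Int.le_ceil sR]) h5
      exact_mod_cast h6
    · intro i
      have h5 : (y i : ℝ) ≤ sR := by have := h4 i; rw [abs_le] at this; exact this.2
      have h6 : (y i : ℝ) ≤ ((⌈sR⌉:ℤ) : ℝ) := le_trans h5 (Int.le_ceil sR)
      exact_mod_cast h6
  -- existence of a closest lattice point
  have hminex : ∀ x : Fin g → ℤ, ∃ z : (Fin g → ℤ) →ₗ[ℤ] ℤ,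
      ∀ u : (Fin g → ℤ) →ₗ[ℤ] ℤ,
      Bb (iota (x - (2*(ℓ:ℤ)) • ((φ z : Fin g → ℤ))))
         (iota (x - (2*(ℓ:ℤ)) • ((φ z : Fin g → ℤ))))
      ≤ Bb (iota (x - (2*(ℓ:ℤ)) • ((φ u : Fin g → ℤ))))
           (iota (x - (2*(ℓ:ℤ)) • ((φ u : Fin g → ℤ)))) := by
    intro x
    have hFsub : {y : Fin g → ℤ | (∃ u : (Fin g → ℤ) →ₗ[ℤ] ℤ, y = (2*(ℓ:ℤ)) • ((φ u : Fin g → ℤ))) ∧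
        Bb (iota (x - y)) (iota (x - y)) ≤ Bb (iota x) (iota x)}.Finite := by
      have hsub : {y : Fin g → ℤ | (∃ u : (Fin g → ℤ) →ₗ[ℤ] ℤ, y = (2*(ℓ:ℤ)) • ((φ u : Fin g → ℤ))) ∧
          Bb (iota (x - y)) (iota (x - y)) ≤ Bb (iota x) (iota x)}
          ⊆ (fun y : Fin g → ℤ => x - y) ⁻¹' {w : Fin g → ℤ | Bb (iota w) (iota w) ≤ Bb (iota x) (iota x)} :=
        fun y hy => hy.2
      refine Set.Finite.subset (Set.Finite.preimage ?_ (hfin (Bb (iota x) (iota x)))) hsub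
      have hinj : Function.Injective (fun y : Fin g → ℤ => x - y) := sub_right_injective
      exact hinj.injOn
    have h0 : (0 : Fin g → ℤ) ∈ {y : Fin g → ℤ | (∃ u : (Fin g → ℤ) →ₗ[ℤ] ℤ, y = (2*(ℓ:ℤ)) • ((φ u : Fin g → ℤ))) ∧
        Bb (iota (x - y)) (iota (x - y)) ≤ Bb (iota x) (iota x)} := by
      constructor
      · exact ⟨0, by rw [hφzero]; simp⟩
      · simp
    obtain ⟨y₀, hy₀, hymin⟩ := hFsub.toFinset.exists_min_image
      (fun y => Bb (iota (x - y)) (iota (x - y))) ⟨0, hFsub.mem_toFinset.mpr h0⟩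
    rw [Set.Finite.mem_toFinset] at hy₀
    obtain ⟨⟨z, hz⟩, hy₀le⟩ := hy₀
    subst hz
    refine ⟨z, fun u => ?_⟩
    by_cases hcase : Bb (iota (x - (2*(ℓ:ℤ)) • ((φ u : Fin g → ℤ))))
        (iota (x - (2*(ℓ:ℤ)) • ((φ u : Fin g → ℤ)))) ≤ Bb (iota x) (iota x)
    · exact hymin _ (hFsub.mem_toFinset.mpr ⟨⟨u, rfl⟩, hcase⟩)
    · push_neg at hcase
      have h1 := hymin 0 (hFsub.mem_toFinset.mpr h0)
      simp only [sub_zero] at h1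
      linarith
  choose zm hzm using hminex
  -- the Voronoi representative
  set gam : (Fin g → ℤ) → Fin g → ℤ :=
    fun x => x - (2*(ℓ:ℤ)) • ((φ (zm x) : Fin g → ℤ)) with hgamdef
  have hgam : ∀ x : Fin g → ℤ, x = gam x + (2*(ℓ:ℤ)) • ((φ (zm x) : Fin g → ℤ)) := by
    intro x; simp only [hgamdef]; abel
  -- the representative lies in Σ_ℓ
  have hgamSig : ∀ x : Fin g → ℤ, gam x ∈ SigmaL φ ℓ := by
    intro x
    simp only [SigmaL, Set.mem_setOf_eq, El]
    intro u
    have h1 := hzm x (zm x - u)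
    have h2 : x - (2*(ℓ:ℤ)) • ((φ (zm x - u) : Fin g → ℤ))
        = gam x + (2*(ℓ:ℤ)) • ((φ u : Fin g → ℤ)) := by
      rw [hφsub]
      simp only [hgamdef]
      push_cast [Submodule.coe_sub]
      rw [smul_sub]
      abel
    rw [h2, hquad] at h1
    have h3 : (0:ℝ) ≤ 4*(ℓ:ℝ)*(N:ℝ)*((u (gam x) : ℤ):ℝ)
        + 4*(ℓ:ℝ)^2*(N:ℝ)*((u ((φ u : Fin g → ℤ)) : ℤ):ℝ) := by
      have h4 := hzm x (zm x)
      linarith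
    have h5 : 4*(ℓ:ℝ)*(N:ℝ)*((u (gam x) : ℤ):ℝ) + 4*(ℓ:ℝ)^2*(N:ℝ)*((u ((φ u : Fin g → ℤ)) : ℤ):ℝ)
        = 4*(ℓ:ℝ)*(N:ℝ) * (((u (gam x) : ℤ):ℝ) + (ℓ:ℝ)*((u ((φ u : Fin g → ℤ)) : ℤ):ℝ)) := by ring
    rw [h5] at h3
    have h6 : (0:ℝ) < 4*(ℓ:ℝ)*(N:ℝ) := by positivity
    have h7 : (0:ℝ) ≤ ((u (gam x) : ℤ):ℝ) + (ℓ:ℝ)*((u ((φ u : Fin g → ℤ)) : ℤ):ℝ) := by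
      by_contra h8
      push_neg at h8
      nlinarith
    have h9 : (0:ℝ) ≤ (((ℓ:ℤ) * u ((φ u : Fin g → ℤ)) + u (gam x) : ℤ) : ℝ) := by
      push_cast
      linarith
    exact_mod_cast h9
  -- the key formula for D
  have hDval : ∀ x : Fin g → ℤ,
      4*(ℓ:ℝ)*(N:ℝ) * ((D x : ℤ):ℝ)
      = Bb (iota x) (iota x) - Bb (iota (gam x)) (iota (gam x)) := by
    intro x
    have hDx : D x = El φ ℓ (zm x) + (zm x) (gam x) := by
      conv_lhs => rw [hgam x]
      exact hD (gam x) (hgamSig x) (zm x)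
    have hq := hquad (gam x) (zm x)
    rw [← hgam x] at hq
    rw [hDx, hq]
    simp only [El]
    push_cast
    ring
  -- uniform bound on the representative
  obtain ⟨K, hKdef⟩ : ∃ K : ℤ, K = 2*(ℓ:ℤ)*(Y.toAddSubgroup.index : ℤ)*(N:ℤ) := ⟨_, rfl⟩
  have hK : 0 < K := by
    have hi : (0:ℤ) < (Y.toAddSubgroup.index : ℤ) := by
      exact_mod_cast Nat.pos_of_ne_zero hYfin
    have hl : (0:ℤ) < (ℓ:ℤ) := by exact_mod_cast hℓ
    have hn : (0:ℤ) < (N:ℤ) := by exact_mod_cast hNpos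
    rw [hKdef]
    positivity
  obtain ⟨C0, hC0def⟩ : ∃ C0 : ℝ, C0 = U * (K:ℝ)^2 := ⟨_, rfl⟩
  have hC00 : 0 ≤ C0 := by
    rw [hC0def]; positivity
  have hC0bound : ∀ x : Fin g → ℤ, Bb (iota (gam x)) (iota (gam x)) ≤ C0 := by
    intro x
    set qt : Fin g → ℤ := fun i => x i / K with hqt
    set r : Fin g → ℤ := fun i => x i % K with hr
    have hxsplit : x = K • qt + r := by
      funext i
      simp only [Pi.add_apply, Pi.smul_apply, smul_eq_mul, hqt, hr]
      exact (Int.mul_ediv_add_emod (x i) K).symm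
    have hmem : (Y.toAddSubgroup.index : ℤ) • qt ∈ Y := by
      have h1 := AddSubgroup.nsmul_index_mem Y.toAddSubgroup qt
      have h2 : (Y.toAddSubgroup.index : ℤ) • qt = Y.toAddSubgroup.index • qt :=
        natCast_zsmul qt Y.toAddSubgroup.index
      rw [h2]
      exact h1
    have hphiw : ((φ (B ⟨(Y.toAddSubgroup.index : ℤ) • qt, hmem⟩) : Fin g → ℤ))
        = ((N:ℤ) * ((Y.toAddSubgroup.index : ℤ))) • qt := by
      rw [hφβ]
      rw [Submodule.coe_smul]
      rw [smul_smul]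
    have h2 : x - (2*(ℓ:ℤ)) • ((φ (B ⟨(Y.toAddSubgroup.index : ℤ) • qt, hmem⟩) : Fin g → ℤ)) = r := by
      rw [hphiw, smul_smul]
      have h3 : (2*(ℓ:ℤ)) * ((N:ℤ) * (Y.toAddSubgroup.index : ℤ)) = K := by rw [hKdef]; ring
      rw [h3, hxsplit]
      abel
    have h3 := hzm x (B ⟨(Y.toAddSubgroup.index : ℤ) • qt, hmem⟩)
    rw [h2] at h3
    have h4 : ‖iota r‖ ≤ (K:ℝ) := by
      rw [pi_norm_le_iff_of_nonneg (by exact_mod_cast le_of_lt hK)]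
      intro i
      have h5 : 0 ≤ x i % K := Int.emod_nonneg _ (ne_of_gt hK)
      have h6 : x i % K < K := Int.emod_lt_of_pos _ hK
      simp only [iota, hr, Real.norm_eq_abs]
      rw [abs_of_nonneg (by exact_mod_cast h5)]
      exact_mod_cast le_of_lt h6
    calc Bb (iota (gam x)) (iota (gam x)) ≤ Bb (iota r) (iota r) := h3
      _ ≤ U * ‖iota r‖^2 := hupper _
      _ ≤ U * (K:ℝ)^2 := by
          have := pow_le_pow_left₀ (norm_nonneg (iota r)) h4 2
          nlinarith
      _ = C0 := hC0def.symm
  -- remaining constants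
  obtain ⟨A2, hA2def⟩ : ∃ A2 : ℝ, A2 = ∑ i, |Bb (Pi.single i 1) (Pi.single i 1)| := ⟨_, rfl⟩
  have hA20 : 0 ≤ A2 := hA2def ▸ Finset.sum_nonneg fun i _ => abs_nonneg _
  obtain ⟨Qa, hQadef⟩ : ∃ Qa : ℝ, Qa = Bb (iota α) (iota α) := ⟨_, rfl⟩
  have hQa0 : 0 ≤ Qa := hQadef ▸ hQ0 _
  obtain ⟨C1, hC1def⟩ : ∃ C1 : ℝ, C1 = 3*A2 + Qa + C0 + 1 := ⟨_, rfl⟩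
  have hC10 : 0 < C1 := by rw [hC1def]; linarith
  obtain ⟨R, hRdef⟩ : ∃ R : ℝ, R = U * (C1 * (g:ℝ) / (2*μ))^2 + A2 + 1 := ⟨_, rfl⟩
  have hR1 : 1 ≤ R := by
    rw [hRdef]
    have : 0 ≤ U * (C1 * (g:ℝ) / (2*μ))^2 := by positivity
    linarith
  have hRA2 : A2 ≤ R := by
    rw [hRdef]
    have : 0 ≤ U * (C1 * (g:ℝ) / (2*μ))^2 := by positivity
    linarith
  -- single coordinate vectors have small quadratic value
  have hsingleA2 : ∀ i : Fin g, Bb (Pi.single i 1) (Pi.single i 1) ≤ A2 := by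
    intro i
    rw [hA2def]
    calc Bb (Pi.single i 1) (Pi.single i 1) ≤ |Bb (Pi.single i 1) (Pi.single i 1)| := le_abs_self _
      _ ≤ ∑ j, |Bb (Pi.single j 1) (Pi.single j 1)| :=
        Finset.single_le_sum (f := fun j => |Bb (Pi.single j (1:ℝ)) (Pi.single j 1)|)
          (fun j _ => abs_nonneg _) (Finset.mem_univ i)
  -- choice of a good step direction
  have hstep : ∀ v : Fin g → ℝ, R < Bb v v → ∃ s : Fin g → ℤ,
      Bb (iota s) (iota s) ≤ A2 ∧ C1 < 2 * Bb v (iota s) := by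
    intro v hv
    have hg0 : (0:ℝ) < (g:ℝ) := by exact_mod_cast hg
    have hT : C1 * (g:ℝ) / (2*μ) < ‖v‖ := by
      have h1 := hupper v
      have hT0 : 0 ≤ C1 * (g:ℝ) / (2*μ) := by positivity
      have h2 : U * (C1 * (g:ℝ) / (2*μ))^2 + A2 + 1 < U * ‖v‖^2 := by
        rw [← hRdef]; linarith
      have h3 : (C1 * (g:ℝ) / (2*μ))^2 < ‖v‖^2 := by nlinarith
      nlinarith [norm_nonneg v]
    obtain ⟨i, hi⟩ : ∃ i : Fin g, C1 < 2 * |Bb v (Pi.single i 1)| := by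
      by_contra hcon
      push_neg at hcon
      have h1 := hμle v
      have h2 : ∑ i, |Bb v (Pi.single i 1)| ≤ (g:ℝ) * (C1/2) := by
        calc ∑ i, |Bb v (Pi.single i 1)| ≤ ∑ _i : Fin g, C1/2 :=
              Finset.sum_le_sum fun i _ => by linarith [hcon i]
          _ = (g:ℝ) * (C1/2) := by
              rw [Finset.sum_const, Finset.card_univ, Fintype.card_fin, nsmul_eq_mul]
      have h3 : μ * (C1 * (g:ℝ) / (2*μ)) = (g:ℝ) * (C1/2) := by field_simp
      nlinarith [mul_lt_mul_of_pos_left hT hμ]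
    by_cases hsgn : 0 ≤ Bb v (Pi.single i (1:ℝ))
    · refine ⟨Pi.single i 1, ?_, ?_⟩
      · rw [iota_single]; exact hsingleA2 i
      · rw [iota_single]
        rw [abs_of_nonneg hsgn] at hi
        exact hi
    · push_neg at hsgn
      refine ⟨-(Pi.single i 1), ?_, ?_⟩
      · simp only [iota_neg, iota_single, map_neg, LinearMap.neg_apply, neg_neg]
        exact hsingleA2 i
      · rw [iota_neg, iota_single, map_neg]
        rw [abs_of_neg hsgn] at hi
        exact hi
  -- the finite generating set
  have hSfin : {x : Fin g → ℤ | Bb (iota (x - α)) (iota (x - α)) ≤ R}.Finite := by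
    have hsub : {x : Fin g → ℤ | Bb (iota (x - α)) (iota (x - α)) ≤ R}
        ⊆ (fun x : Fin g → ℤ => x - α) ⁻¹' {y : Fin g → ℤ | Bb (iota y) (iota y) ≤ R} :=
      fun x hx => hx
    have hinj : Function.Injective (fun x : Fin g → ℤ => x - α) := sub_left_injective
    exact Set.Finite.subset (Set.Finite.preimage hinj.injOn (hfin R)) hsub
  set S : Finset (ℤ × (Fin g → ℤ)) :=
    insert ((1:ℤ), (0 : Fin g → ℤ)) (hSfin.toFinset.image fun x => ((D x : ℤ), x - α))
    with hSdef
  have hone : ((1:ℤ), (0 : Fin g → ℤ)) ∈ (S : Set (ℤ × (Fin g → ℤ))) := by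
    simp [hSdef]
  have hgen : ∀ x : Fin g → ℤ, Bb (iota (x - α)) (iota (x - α)) ≤ R →
      ((D x : ℤ), x - α) ∈ (S : Set (ℤ × (Fin g → ℤ))) := by
    intro x hx
    simp only [hSdef, Finset.coe_insert, Set.mem_insert_iff, Finset.coe_image, Set.mem_image,
      Set.Finite.coe_toFinset, Set.mem_setOf_eq]
    exact Or.inr ⟨x, hx, rfl⟩
  -- main induction
  have main : ∀ n : ℕ, ∀ x : Fin g → ℤ,
      ⌈Bb (iota (x - α)) (iota (x - α))⌉₊ < n →
      ((D x : ℤ), x - α) ∈ AddSubmonoid.closure (S : Set (ℤ × (Fin g → ℤ))) := by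
    intro n
    induction n with
    | zero => exact fun x hx => absurd hx (Nat.not_lt_zero _)
    | succ n ih =>
      intro x hx
      by_cases hsm : Bb (iota (x - α)) (iota (x - α)) ≤ R
      · exact AddSubmonoid.subset_closure (hgen x hsm)
      · push_neg at hsm
        obtain ⟨s, hsA2, hsC1⟩ := hstep _ hsm
        have hx1a : iota (x - s - α) = iota (x - α) - iota s := by
          rw [show x - s - α = (x - α) - s by abel, iota_sub]
        have hx2a : (α + s) - α = s := by abel
        have hQs0 : 0 ≤ Bb (iota s) (iota s) := hQ0 _
        have hE1 : Bb (iota (x - s - α)) (iota (x - s - α))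
            = Bb (iota (x - α)) (iota (x - α)) - 2 * Bb (iota (x - α)) (iota s)
              + Bb (iota s) (iota s) := by
          rw [hx1a, bilin_sub Bb hBbsymm]
        have hceil1 : 1 ≤ ⌈Bb (iota (x - α)) (iota (x - α))⌉₊ := by
          rw [Nat.one_le_ceil_iff]
          linarith
        have hmeas : ⌈Bb (iota (x - s - α)) (iota (x - s - α))⌉₊ < n := by
          have hC1A2 : A2 + 1 ≤ C1 := by rw [hC1def]; linarith
          have hle : Bb (iota (x - s - α)) (iota (x - s - α))
              ≤ Bb (iota (x - α)) (iota (x - α)) - 1 := by linarith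
          have h2 : Bb (iota (x - s - α)) (iota (x - s - α))
              ≤ (⌈Bb (iota (x - α)) (iota (x - α))⌉₊ : ℝ) - 1 :=
            le_trans hle (by linarith [Nat.le_ceil (Bb (iota (x - α)) (iota (x - α)))])
          have h3 : ⌈Bb (iota (x - s - α)) (iota (x - s - α))⌉₊
              ≤ ⌈Bb (iota (x - α)) (iota (x - α))⌉₊ - 1 := by
            apply Nat.ceil_le.mpr
            rw [Nat.cast_sub hceil1]
            exact_mod_cast h2
          omega
        have hm1 := ih (x - s) hmeas
        have hm2 : ((D (α + s) : ℤ), (α + s) - α)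
            ∈ AddSubmonoid.closure (S : Set (ℤ × (Fin g → ℤ))) := by
          apply AddSubmonoid.subset_closure
          apply hgen
          rw [hx2a]
          linarith
        obtain ⟨k, hkdef⟩ : ∃ k : ℤ, k = D x - D (x - s) - D (α + s) := ⟨_, rfl⟩
        have hkR : (0:ℝ) ≤ 4*(ℓ:ℝ)*(N:ℝ) * ((k:ℤ):ℝ) := by
          have e0 := hDval x
          have e1 := hDval (x - s)
          have e2 := hDval (α + s)
          have hG1 : Bb (iota (x - s)) (iota (x - s))
              = Bb (iota x) (iota x) - 2 * Bb (iota x) (iota s) + Bb (iota s) (iota s) := by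
            rw [iota_sub, bilin_sub Bb hBbsymm]
          have hG2 : Bb (iota (α + s)) (iota (α + s))
              = Qa + 2 * Bb (iota α) (iota s) + Bb (iota s) (iota s) := by
            rw [iota_add, bilin_add Bb hBbsymm, hQadef]
          have hxv : Bb (iota x) (iota s)
              = Bb (iota (x - α)) (iota s) + Bb (iota α) (iota s) := by
            have hxd : iota x = iota (x - α) + iota α := by
              have h0 : x - α + α = x := by abel
              rw [← iota_add, h0]
            rw [hxd, map_add, LinearMap.add_apply]
          have hγx := hC0bound x
          have hγ1 := hQ0 (iota (gam (x - s)))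
          have hγ2 := hQ0 (iota (gam (α + s)))
          have hkcast : ((k:ℤ):ℝ)
              = ((D x : ℤ):ℝ) - ((D (x-s) : ℤ):ℝ) - ((D (α+s) : ℤ):ℝ) := by
            rw [hkdef]; push_cast; ring
          have hC1' : C1 = 3*A2 + Qa + C0 + 1 := hC1def
          rw [hkcast]
          linarith [e0, e1, e2, hG1, hG2, hxv, hγx, hγ1, hγ2, hsA2, hsC1, hQs0, hQa0, hA20, hC00, hC1']
        have hk : 0 ≤ k := by
          by_contra hneg
          push_neg at hneg
          have hkr : ((k:ℤ):ℝ) < 0 := by exact_mod_cast hneg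
          have h6 : (0:ℝ) < 4*(ℓ:ℝ)*(N:ℝ) := by positivity
          have h7 := mul_neg_of_pos_of_neg h6 hkr
          linarith
        have hsum : ((D x : ℤ), x - α)
            = ((D (x - s) : ℤ), (x - s) - α) + ((D (α + s) : ℤ), (α + s) - α)
              + k.toNat • ((1:ℤ), (0 : Fin g → ℤ)) := by
          have hkt : (k.toNat : ℤ) = k := Int.toNat_of_nonneg hk
          have hpair : k.toNat • ((1:ℤ), (0 : Fin g → ℤ)) = ((k:ℤ), (0 : Fin g → ℤ)) := by
            rw [Prod.smul_mk, smul_zero, nsmul_eq_mul, mul_one, hkt]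
          rw [hpair, Prod.mk_add_mk, Prod.mk_add_mk]
          have hfst : (D x : ℤ) = D (x - s) + D (α + s) + k := by omega
          have hsnd : x - α = (x - s - α) + ((α + s) - α) + 0 := by abel
          rw [← hfst, ← hsnd]
        rw [hsum]
        have honeC : ((1:ℤ), (0 : Fin g → ℤ))
            ∈ AddSubmonoid.closure (S : Set (ℤ × (Fin g → ℤ))) :=
          AddSubmonoid.subset_closure hone
        exact add_mem (add_mem hm1 hm2) (nsmul_mem honeC _)
  -- conclusion
  refine ⟨S, le_antisymm ?_ ?_⟩
  · rw [AddSubmonoid.closure_le]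
    intro p hp
    simp only [hSdef, Finset.coe_insert, Set.mem_insert_iff, Finset.coe_image, Set.mem_image,
      Set.Finite.coe_toFinset, Set.mem_setOf_eq] at hp
    rcases hp with rfl | ⟨x, _, rfl⟩

    · exact AddSubmonoid.subset_closure (Set.mem_insert _ _)
    · exact AddSubmonoid.subset_closure (Set.mem_insert_of_mem _ ⟨x, rfl⟩)
  · rw [AddSubmonoid.closure_le]
    intro p hp
    rcases Set.mem_insert_iff.mp hp with rfl | hx
    · exact AddSubmonoid.subset_closure hone
    · obtain ⟨x, rfl⟩ := hx
      exact main (⌈Bb (iota (x - α)) (iota (x - α))⌉₊ + 1) x (Nat.lt_succ_self _)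

end NFC
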